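/- In a labeled cons-free ATRS where all constructors take only base-type arguments, the rewrite relation →_{R_lab} is terminating: there is no infinite reduction sequence. -/

import Mathlib

/-! # Applicative term rewriting systems (ATRSs) -/

/-- Simple types over a countable set of sorts. -/
inductive Ty where
  | base : ℕ → Ty
  | arrow : Ty → Ty → Ty

/-- Type order: sorts have order 0, `σ ⇒ τ` has order `max (order σ + 1) (order τ)`. -/
def Ty.order : Ty → ℕ
  | .base _ => 0
  | .arrow σ τ => max (σ.order + 1) τ.order

/-- Applicative terms over a set `α` of function symbols, with variables `ℕ`. -/
inductive Tm (α : Type) where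
  | sym : α → Tm α
  | var : ℕ → Tm α
  | app : Tm α → Tm α → Tm α

mutual
  /-- Strict subterm: `t` is a strict subterm of `s₁ s₂` if it is a strict
  subterm of `s₁` or a subterm of `s₂` (heads of applications are not subterms). -/
  inductive StrSubtm {α : Type} : Tm α → Tm α → Prop where
    | left {t s u : Tm α} : StrSubtm t s → StrSubtm t (Tm.app s u)
    | right {t s u : Tm α} : Subtm t u → StrSubtm t (Tm.app s u)
  /-- Subterm: `t ⊴ s` iff `t = s` or `t` is a strict subterm of `s`. -/
  inductive Subtm {α : Type} : Tm α → Tm α → Prop where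
    | refl (s : Tm α) : Subtm s s
    | strict {t s : Tm α} : StrSubtm t s → Subtm t s
end

/-- A signature: which symbols are constructors, their types, and variable types. -/
structure Sig (α : Type) where
  Cons : α → Prop
  typeOf : α → Ty
  varTy : ℕ → Ty

/-- Typing judgement for applicative terms. -/
inductive HasTy {α : Type} (S : Sig α) : Tm α → Ty → Prop where
  | sym (f : α) : HasTy S (.sym f) (S.typeOf f)
  | var (x : ℕ) : HasTy S (.var x) (S.varTy x)
  | app {s t : Tm α} {σ τ : Ty} :
      HasTy S s (.arrow σ τ) → HasTy S t σ → HasTy S (.app s t) τ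

mutual
  /-- Patterns: a variable, or a constructor fully applied (to base type) to patterns. -/
  inductive Pat {α : Type} (S : Sig α) : Tm α → Prop where
    | var (x : ℕ) : Pat S (.var x)
    | cons {s : Tm α} : PatSpine S s → (∃ i, HasTy S s (.base i)) → Pat S s
  /-- A constructor applied to a (possibly incomplete) list of patterns. -/
  inductive PatSpine {α : Type} (S : Sig α) : Tm α → Prop where
    | head {f : α} : S.Cons f → PatSpine S (.sym f)
    | app {s t : Tm α} : PatSpine S s → Pat S t → PatSpine S (.app s t)
end

/-- Ground terms: terms without variables. -/
def Tm.ground {α : Type} : Tm α → Prop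
  | .sym _ => True
  | .var _ => False
  | .app s t => s.ground ∧ t.ground

/-- Data terms: ground patterns. -/
def IsData {α : Type} (S : Sig α) (s : Tm α) : Prop := Pat S s ∧ s.ground

/-- The set of variables of a term. -/
def Tm.vars {α : Type} : Tm α → Set ℕ
  | .sym _ => ∅
  | .var x => {x}
  | .app s t => s.vars ∪ t.vars

/-- Number of occurrences of variable `x` in a term. -/
def Tm.count {α : Type} (x : ℕ) : Tm α → ℕ
  | .sym _ => 0
  | .var y => if y = x then 1 else 0
  | .app s t => Tm.count x s + Tm.count x t

/-- Applying a substitution to a term. -/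
def subst {α : Type} (γ : ℕ → Tm α) : Tm α → Tm α
  | .sym f => .sym f
  | .var x => γ x
  | .app s t => .app (subst γ s) (subst γ t)

/-- A rewrite rule. -/
structure Rule (α : Type) where
  lhs : Tm α
  rhs : Tm α

/-- Left-hand side shape of a constructor rule:
a defined symbol applied to patterns. -/
inductive LhsSpine {α : Type} (S : Sig α) : Tm α → Prop where
  | head {f : α} : ¬ S.Cons f → LhsSpine S (.sym f)
  | app {s t : Tm α} : LhsSpine S s → Pat S t → LhsSpine S (.app s t)

/-- The head symbol of a term, if any. -/
def Tm.headSym {α : Type} : Tm α → Option α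
  | .sym f => some f
  | .var _ => none
  | .app s _ => s.headSym

/-- `t` has the form `c t₁ ⋯ t_m` with `c` a constructor. -/
def ConsHead {α : Type} (S : Sig α) (t : Tm α) : Prop :=
  ∃ f, t.headSym = some f ∧ S.Cons f

/-- A rule is cons-free if every constructor-headed subterm of the right-hand side
is a data term or a (strict) subterm of the left-hand side. -/
def ConsFreeRule {α : Type} (S : Sig α) (ρ : Rule α) : Prop :=
  ∀ t, Subtm t ρ.rhs → ConsHead S t → (IsData S t ∨ StrSubtm t ρ.lhs)

/-- A left-linear cons-free constructor rule (with well-typed sides of equal type,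
and variables of the right-hand side occurring on the left). -/
def GoodRule {α : Type} (S : Sig α) (ρ : Rule α) : Prop :=
  LhsSpine S ρ.lhs ∧
  (∀ x, Tm.count x ρ.lhs ≤ 1) ∧
  ρ.rhs.vars ⊆ ρ.lhs.vars ∧
  (∃ σ, HasTy S ρ.lhs σ ∧ HasTy S ρ.rhs σ) ∧
  ConsFreeRule S ρ

/-- One-step rewriting: closure of rule instances under application contexts. -/
inductive Rew {α : Type} (R : Set (Rule α)) : Tm α → Tm α → Prop where
  | root {ρ : Rule α} {γ : ℕ → Tm α} :
      ρ ∈ R → Rew R (subst γ ρ.lhs) (subst γ ρ.rhs)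
  | appL {s s' t : Tm α} : Rew R s s' → Rew R (.app s t) (.app s' t)
  | appR {s t t' : Tm α} : Rew R t t' → Rew R (.app s t) (.app s t')

/-- `s` is `B`-safe: every constructor-headed subterm of `s` lies in `B`. -/
def BSafe {α : Type} (S : Sig α) (B : Set (Tm α)) (s : Tm α) : Prop :=
  ∀ t, Subtm t s → ConsHead S t → t ∈ B

/-- `B` is a suitable set of data terms: it consists of data terms, is closed
under subterms, and contains all data subterms of right-hand sides of rules. -/
def GoodB {α : Type} (S : Sig α) (R : Set (Rule α)) (B : Set (Tm α)) : Prop :=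
  (∀ t ∈ B, IsData S t) ∧
  (∀ t ∈ B, ∀ u, Subtm u t → u ∈ B) ∧
  (∀ ρ ∈ R, ∀ t, Subtm t ρ.rhs → IsData S t → t ∈ B)

/-- Spine of a basic term: a defined symbol applied to data terms. -/
inductive BasicSpine {α : Type} (S : Sig α) : Tm α → Prop where
  | head {f : α} : ¬ S.Cons f → BasicSpine S (.sym f)
  | app {s t : Tm α} : BasicSpine S s → IsData S t → BasicSpine S (.app s t)

/-- Basic terms: a defined symbol applied to data terms, of base type. -/
def Basic {α : Type} (S : Sig α) (s : Tm α) : Prop :=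
  BasicSpine S s ∧ ∃ i, HasTy S s (.base i)

/-- The set `B_s`: data terms occurring in `s` or in a right-hand side of a rule. -/
def Bset {α : Type} (S : Sig α) (R : Set (Rule α)) (s : Tm α) : Set (Tm α) :=
  { t | IsData S t ∧ (Subtm t s ∨ ∃ ρ ∈ R, Subtm t ρ.rhs) }
/-! # Labeled systems -/

open Classical in
/-- `labelTm S i s` replaces every defined symbol `f` of `s` by its `i`-labeled
copy `(f, i)`; constructors are unaffected (they get the fixed label `0`). -/
noncomputable def labelTm {α : Type} (S : Sig α) (i : ℕ) : Tm α → Tm (α × ℕ)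
  | .sym f => .sym (f, if S.Cons f then 0 else i)
  | .var x => .var x
  | .app s t => .app (labelTm S i s) (labelTm S i t)

/-- Erasing labels. -/
def eraseTm {α : Type} : Tm (α × ℕ) → Tm α
  | .sym p => .sym p.1
  | .var x => .var x
  | .app s t => .app (eraseTm s) (eraseTm t)

/-- The labeled signature: each labeled copy keeps the status and type of the
original symbol. -/
def SigLab {α : Type} (S : Sig α) : Sig (α × ℕ) :=
  { Cons := fun p => S.Cons p.1
    typeOf := fun p => S.typeOf p.1
    varTy := S.varTy }

/-- The labeled rules: `f_{i+1} → f_i` for every defined symbol `f`, and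
`f_{i+1} ℓ₁ ⋯ ℓ_k → label_i(r)` for every rule `f ℓ₁ ⋯ ℓ_k → r` of `R`. -/
def RLab {α : Type} (S : Sig α) (R : Set (Rule α)) : Set (Rule (α × ℕ)) :=
  { ρ' | ∃ f i, ¬ S.Cons f ∧ ρ' = ⟨.sym (f, i + 1), .sym (f, i)⟩ } ∪
  { ρ' | ∃ ρ ∈ R, ∃ i, ρ' = ⟨labelTm S (i + 1) ρ.lhs, labelTm S i ρ.rhs⟩ }

/-- A symbol applied to a list of arguments. -/
def mkApp {α : Type} (h : Tm α) (l : List (Tm α)) : Tm α := l.foldl Tm.app h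

/-- All argument types of a type are of order 0 (base types). -/
def ConsArgsBase : Ty → Prop
  | .base _ => True
  | .arrow σ τ => σ.order = 0 ∧ ConsArgsBase τ

/-- Termination of a term: no infinite reduction starts from it. -/
def TerminatingTm {α : Type} (R : Set (Rule α)) (s : Tm α) : Prop :=
  ¬ ∃ seq : ℕ → Tm α, seq 0 = s ∧ ∀ n, Rew R (seq n) (seq (n + 1))

/-- The computability predicate, by recursion on types: a base-type term is
computable iff it is terminating; `s : σ ⇒ τ` is computable iff `s t` is
computable for every computable `t : σ`. -/
def Comp {α : Type} (S : Sig α) (R : Set (Rule α)) : Ty → Tm α → Prop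
  | .base _, s => TerminatingTm R s
  | .arrow σ τ, s => ∀ t, HasTy S t σ → Comp S R σ t → Comp S R τ (.app s t)

/-- Existence of a semi-outermost reduction from `s` to `t`. -/
inductive SemiOut {α : Type} (R : Set (Rule α)) : Tm α → Tm α → Prop where
  | refl (s : Tm α) : SemiOut R s s
  | step {f : α} {ss ls : List (Tm α)} {ρ : Rule α} {γ : ℕ → Tm α} {t : Tm α}
      (hρ : ρ ∈ R) (hl : ρ.lhs = mkApp (Tm.sym f) ls)
      (hle : ls.length ≤ ss.length)
      (hargs : ∀ j (hj : j < ls.length),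
        SemiOut R (ss[j]'(lt_of_lt_of_le hj hle)) (subst γ (ls[j]'hj)))
      (hvar : ∀ j (hj : j < ls.length), (∃ x, ls[j]'hj = Tm.var x) →
        ss[j]'(lt_of_lt_of_le hj hle) = subst γ (ls[j]'hj))
      (hrest : SemiOut R (mkApp (subst γ ρ.rhs) (ss.drop ls.length)) t) :
      SemiOut R (mkApp (Tm.sym f) ss) t

namespace LabProof

variable {α : Type}

/-! ## Basic `mkApp` / spine lemmas -/

theorem mkApp_nil (s : Tm α) : mkApp s [] = s := rfl

theorem mkApp_cons (s t : Tm α) (ts : List (Tm α)) :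
    mkApp s (t :: ts) = mkApp (.app s t) ts := rfl

theorem mkApp_append (s : Tm α) (l₁ l₂ : List (Tm α)) :
    mkApp s (l₁ ++ l₂) = mkApp (mkApp s l₁) l₂ := by
  simp [mkApp, List.foldl_append]

theorem mkApp_snoc (s t : Tm α) (ts : List (Tm α)) :
    mkApp s (ts ++ [t]) = .app (mkApp s ts) t := by
  simp [mkApp, List.foldl_append]

def spn : Tm α → Tm α × List (Tm α)
  | .app s t => ((spn s).1, (spn s).2 ++ [t])
  | s => (s, [])

theorem spn_mkApp (a : α) (ts : List (Tm α)) : spn (mkApp (.sym a) ts) = (.sym a, ts) := by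
  induction ts using List.reverseRecOn with
  | nil => rfl
  | append_singleton ts t ih => rw [mkApp_snoc]; simp [spn, ih]

theorem mkApp_sym_inj {a b : α} {xs ys : List (Tm α)}
    (h : mkApp (.sym a) xs = mkApp (.sym b) ys) : a = b ∧ xs = ys := by
  have h2 := congrArg spn h
  rw [spn_mkApp, spn_mkApp] at h2
  simp only [Prod.mk.injEq, Tm.sym.injEq] at h2
  exact h2

theorem headSym_app (s t : Tm α) : (Tm.app s t).headSym = s.headSym := rfl

theorem headSym_subst {u : Tm α} {p : α} (γ : ℕ → Tm α)
    (h : u.headSym = some p) : (subst γ u).headSym = some p := by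
  induction u with
  | sym f => exact h
  | var x => exact nomatch h
  | app a b iha ihb => exact iha h

open Classical in
theorem headSym_label (S : Sig α) (i : ℕ) {u : Tm α} {f : α} (h : u.headSym = some f) :
    (labelTm S i u).headSym = some (f, if S.Cons f then 0 else i) := by
  induction u with
  | sym g =>
    have hg : g = f := by simpa [Tm.headSym] using h
    subst hg; rfl
  | var x => exact nomatch h
  | app a b iha ihb => exact iha h

theorem subst_mkApp (γ : ℕ → Tm α) (s : Tm α) (ts : List (Tm α)) :
    subst γ (mkApp s ts) = mkApp (subst γ s) (ts.map (subst γ)) := by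
  induction ts generalizing s with
  | nil => rfl
  | cons t ts ih => exact ih (.app s t)

theorem label_mkApp (S : Sig α) (i : ℕ) (s : Tm α) (ts : List (Tm α)) :
    labelTm S i (mkApp s ts) = mkApp (labelTm S i s) (ts.map (labelTm S i)) := by
  induction ts generalizing s with
  | nil => rfl
  | cons t ts ih => exact ih (.app s t)

theorem mem_vars_mkApp {x : ℕ} (s : Tm α) (ts : List (Tm α)) :
    x ∈ (mkApp s ts).vars ↔ x ∈ s.vars ∨ ∃ q ∈ ts, x ∈ q.vars := by
  induction ts generalizing s with
  | nil => simp [mkApp]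
  | cons t ts ih =>
    rw [mkApp_cons, ih]
    simp [Tm.vars]
    tauto

theorem mem_vars_label {x : ℕ} (S : Sig α) (i : ℕ) (u : Tm α) :
    x ∈ (labelTm S i u).vars ↔ x ∈ u.vars := by
  induction u with
  | sym f => simp [labelTm, Tm.vars]
  | var y => simp [labelTm, Tm.vars]
  | app a b iha ihb => simp [labelTm, Tm.vars, iha, ihb]

theorem subst_var (u : Tm α) : subst .var u = u := by
  induction u <;> simp [subst, *]

/-! ## Typing lemmas -/

theorem labelTy {S : Sig α} {u : Tm α} {τ : Ty} (i : ℕ) (h : HasTy S u τ) :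
    HasTy (SigLab S) (labelTm S i u) τ := by
  induction h with
  | sym f => exact HasTy.sym (S := SigLab S) _
  | var x => exact HasTy.var x
  | app h1 h2 ih1 ih2 => exact HasTy.app ih1 ih2

theorem ty_uniq {S : Sig α} : ∀ {u : Tm α} {σ τ : Ty}, HasTy S u σ → HasTy S u τ → σ = τ := by
  intro u
  induction u with
  | sym f => intro σ τ h1 h2; cases h1; cases h2; rfl
  | var x => intro σ τ h1 h2; cases h1; cases h2; rfl
  | app a b iha ihb =>
    intro σ τ h1 h2
    cases h1 with | app ha hb =>
    cases h2 with | app ha' hb' =>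
    exact (Ty.arrow.inj (iha ha ha')).2

theorem substTy {S : Sig α} {γ : ℕ → Tm α} {u : Tm α} {σ : Ty} (h : HasTy S u σ)
    (hγ : ∀ x ∈ u.vars, HasTy S (γ x) (S.varTy x)) : HasTy S (subst γ u) σ := by
  induction h with
  | sym f => exact HasTy.sym f
  | var x => exact hγ x (by simp [Tm.vars])
  | @app a b σ' τ' h1 h2 ih1 ih2 =>
    exact HasTy.app (ih1 fun x hx => hγ x (by simp only [Tm.vars, Set.mem_union]; exact Or.inl hx))
      (ih2 fun x hx => hγ x (by simp only [Tm.vars, Set.mem_union]; exact Or.inr hx))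

/-! ## Rigid terms and an inversion lemma for typing substitution instances -/

def Rigid : Tm α → Prop
  | .sym _ => True
  | .var _ => False
  | .app a b => Rigid a ∧ (Rigid b ∨ ∃ x, b = .var x)

theorem patSpine_rigid {S : Sig α} : ∀ {q : Tm α}, PatSpine S q → Rigid q := by
  intro q
  induction q with
  | sym f => intro _; trivial
  | var x => intro h; cases h
  | app a b iha ihb =>
    intro h
    cases h with | app hs hp =>
    refine ⟨iha hs, ?_⟩
    cases hp with
    | var x => exact Or.inr ⟨x, rfl⟩
    | cons hps _ => exact Or.inl (ihb hps)

theorem lhs_rigid {S : Sig α} : ∀ {l : Tm α}, LhsSpine S l → Rigid l := by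
  intro l h
  induction h with
  | head hf => trivial
  | app hs hp ih =>
    refine ⟨ih, ?_⟩
    cases hp with
    | var x => exact Or.inr ⟨x, rfl⟩
    | cons hps _ => exact Or.inl (patSpine_rigid hps)

theorem rigid_label (S : Sig α) (i : ℕ) : ∀ {u : Tm α}, Rigid u → Rigid (labelTm S i u) := by
  intro u
  induction u with
  | sym f => intro _; trivial
  | var x => intro h; exact h.elim
  | app a b iha ihb =>
    rintro ⟨ha, hb⟩
    refine ⟨iha ha, ?_⟩
    rcases hb with hb | ⟨x, rfl⟩
    · exact Or.inl (ihb hb)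
    · exact Or.inr ⟨x, rfl⟩

theorem sinv {S : Sig α} (γ : ℕ → Tm α) :
    ∀ {u : Tm α}, Rigid u → ∀ {τ σ : Ty}, HasTy S u τ → HasTy S (subst γ u) σ →
      τ = σ ∧ ∀ x ∈ u.vars, HasTy S (γ x) (S.varTy x) := by
  intro u
  induction u with
  | sym f =>
    intro _ τ σ h1 h2
    cases h1
    cases h2
    exact ⟨rfl, by simp [Tm.vars]⟩
  | var x => intro h; exact h.elim
  | app a b iha ihb =>
    rintro ⟨hra, hrb⟩ τ σ h1 h2
    cases h1 with | @app _ _ σ₁ _ ha hb =>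
    cases h2 with | @app _ _ σ₂ _ ha' hb' =>
    obtain ⟨he, hva⟩ := iha hra ha ha'
    injection he with he1 he2
    subst he1 he2
    refine ⟨rfl, ?_⟩
    intro x hx
    simp only [Tm.vars, Set.mem_union] at hx
    rcases hx with hx | hx
    · exact hva x hx
    · rcases hrb with hrb | ⟨y, rfl⟩
      · exact (ihb hrb hb hb').2 x hx
      · cases hb
        simp [Tm.vars] at hx
        subst hx
        exact hb'

end LabProof
namespace LabProof

variable {α : Type}

/-! ## Pattern lemmas -/

theorem lhsSpine_shape {S : Sig α} {l : Tm α} (h : LhsSpine S l) :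
    ∃ f ls, ¬ S.Cons f ∧ l = mkApp (.sym f) ls ∧ ∀ q ∈ ls, Pat S q := by
  induction h with
  | head hf => exact ⟨_, [], hf, rfl, by simp⟩
  | @app s t hs hp ih =>
    obtain ⟨f, ls, hf, rfl, hpats⟩ := ih
    refine ⟨f, ls ++ [t], hf, (mkApp_snoc _ _ _).symm, ?_⟩
    intro q hq
    rcases List.mem_append.1 hq with h | h
    · exact hpats q h
    · simp at h; subst h; exact hp

theorem order0 {σ : Ty} (h : σ.order = 0) : ∃ b, σ = .base b := by
  cases σ with
  | base b => exact ⟨b, rfl⟩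
  | arrow a c => simp [Ty.order] at h

theorem pat_vars_base {S : Sig α} (hC : ∀ f, S.Cons f → ConsArgsBase (S.typeOf f)) :
    ∀ {q : Tm α}, PatSpine S q → ∀ {τ : Ty}, HasTy S q τ →
      ConsArgsBase τ ∧ ∀ x ∈ q.vars, ∃ b, S.varTy x = .base b := by
  intro q
  induction q with
  | sym f =>
    intro hq τ ht
    cases hq with | head hc =>
    cases ht
    exact ⟨hC f hc, by simp [Tm.vars]⟩
  | var x => intro hq; cases hq
  | app a b iha ihb =>
    intro hq τ ht
    cases hq with | app hs hp =>
    cases ht with | @app _ _ σ _ ha hb2 =>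
    obtain ⟨⟨hord, hcτ⟩, hva⟩ := iha hs ha
    refine ⟨hcτ, ?_⟩
    intro x hx
    simp only [Tm.vars, Set.mem_union] at hx
    rcases hx with hx | hx
    · exact hva x hx
    · cases hp with
      | var y =>
        cases hb2
        simp [Tm.vars] at hx
        subst hx
        obtain ⟨b0, hb0⟩ := order0 hord
        exact ⟨b0, hb0⟩
      | cons hps hbase => exact (ihb hps hb2).2 x hx

theorem pat_var_subtm {S : Sig α} (γ : ℕ → Tm (α × ℕ)) (i : ℕ) :
    ∀ {q : Tm α}, PatSpine S q → ∀ x ∈ q.vars, StrSubtm (γ x) (subst γ (labelTm S i q)) := by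
  intro q
  induction q with
  | sym f => intro _ x hx; simp [Tm.vars] at hx
  | var y => intro h; cases h
  | app a b iha ihb =>
    intro hq x hx
    cases hq with | app hs hp =>
    simp only [Tm.vars, Set.mem_union] at hx
    simp only [labelTm, subst]
    rcases hx with hx | hx
    · exact StrSubtm.left (iha hs x hx)
    · cases hp with
      | var y =>
        simp [Tm.vars] at hx
        subst hx
        exact StrSubtm.right (Subtm.refl _)
      | cons hps _ => exact StrSubtm.right (Subtm.strict (ihb hps x hx))

/-! ## Acc machinery -/

abbrev Rinv (S : Sig α) (R : Set (Rule α)) : Tm (α × ℕ) → Tm (α × ℕ) → Prop :=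
  fun a b => Rew (RLab S R) b a

theorem acc_app_parts {S : Sig α} {R : Set (Rule α)} :
    ∀ {s : Tm (α × ℕ)}, Acc (Rinv S R) s → ∀ u v, s = .app u v →
      Acc (Rinv S R) u ∧ Acc (Rinv S R) v := by
  intro s hs
  induction hs with
  | intro s h ih =>
    rintro u v rfl
    constructor
    · exact ⟨u, fun u' hu => (ih _ (Rew.appL hu) u' v rfl).1⟩
    · exact ⟨v, fun v' hv => (ih _ (Rew.appR hv) u v' rfl).2⟩

theorem acc_subtm {S : Sig α} {R : Set (Rule α)} :
    ∀ {s : Tm (α × ℕ)}, Acc (Rinv S R) s → ∀ {t}, Subtm t s → Acc (Rinv S R) t := by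
  intro s
  induction s with
  | sym f =>
    intro hs t ht
    cases ht with
    | refl => exact hs
    | strict h => cases h
  | var x =>
    intro hs t ht
    cases ht with
    | refl => exact hs
    | strict h => cases h
  | app a b iha ihb =>
    intro hs t ht
    obtain ⟨ha, hb⟩ := acc_app_parts hs a b rfl
    cases ht with
    | refl => exact hs
    | strict h =>
      cases h with
      | left h' => exact iha ha (Subtm.strict h')
      | right h' => exact ihb hb h'

/-! ## Head-stuck terms -/

def HeadOk (S : Sig α) (s : Tm (α × ℕ)) : Prop :=
  ∀ p, s.headSym = some p → S.Cons p.1 ∨ p.2 = 0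

theorem lhsHead {S : Sig α} {l : Tm α} (h : LhsSpine S l) :
    ∃ f, ¬ S.Cons f ∧ l.headSym = some f := by
  induction h with
  | head hf => exact ⟨_, hf, rfl⟩
  | app hs hp ih => exact ih

theorem rootNotOk {S : Sig α} {R : Set (Rule α)} (hR : ∀ ρ ∈ R, GoodRule S ρ)
    {ρ' : Rule (α × ℕ)} (hρ : ρ' ∈ RLab S R) (γ : ℕ → Tm (α × ℕ)) :
    ¬ HeadOk S (subst γ ρ'.lhs) := by
  intro hok
  rcases hρ with ⟨f, i, hf, rfl⟩ | ⟨ρ, hρR, i, rfl⟩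
  · rcases hok (f, i + 1) rfl with h | h
    · exact hf h
    · exact Nat.succ_ne_zero i h
  · obtain ⟨g, hg, hhead⟩ := lhsHead (hR ρ hρR).1
    have h1 := headSym_label S (i + 1) hhead
    rw [if_neg hg] at h1
    have h2 := headSym_subst γ h1
    rcases hok _ h2 with h | h
    · exact hg h
    · exact Nat.succ_ne_zero i h

theorem headOkStep {S : Sig α} {R : Set (Rule α)} (hR : ∀ ρ ∈ R, GoodRule S ρ) :
    ∀ {s s' : Tm (α × ℕ)}, Rew (RLab S R) s s' → HeadOk S s → HeadOk S s' := by
  intro s s' h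
  induction h with
  | @root ρ γ hρ => intro hok; exact absurd hok (rootNotOk hR hρ γ)
  | @appL a a' b ha ih =>
    intro hok p hp
    exact ih (fun q hq => hok q hq) p hp
  | @appR a b b' hb ih =>
    intro hok p hp
    exact hok p hp

theorem accBase {S : Sig α} {R : Set (Rule α)} (hR : ∀ ρ ∈ R, GoodRule S ρ)
    {s : Tm (α × ℕ)} (hok : HeadOk S s) (hna : ∀ a b, s ≠ .app a b) :
    Acc (Rinv S R) s := by
  constructor
  intro y hy
  cases hy with
  | root hρ => exact absurd hok (rootNotOk hR hρ _)
  | appL h => exact absurd rfl (hna _ _)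
  | appR h => exact absurd rfl (hna _ _)

theorem rew_app_inv {S : Sig α} {R : Set (Rule α)} {a b w : Tm (α × ℕ)}
    (h : Rew (RLab S R) (.app a b) w) :
    (∃ ρ γ, ρ ∈ RLab S R ∧ Tm.app a b = subst γ ρ.lhs ∧ w = subst γ ρ.rhs) ∨
    (∃ a', Rew (RLab S R) a a' ∧ w = .app a' b) ∨
    (∃ b', Rew (RLab S R) b b' ∧ w = .app a b') := by
  generalize hu : (Tm.app a b : Tm (α × ℕ)) = u at h
  cases h with
  | @root ρ γ hρ => exact Or.inl ⟨ρ, γ, hρ, rfl, rfl⟩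
  | @appL s s' t h' =>
    injection hu with h1 h2
    subst h1; subst h2
    exact Or.inr (Or.inl ⟨s', h', rfl⟩)
  | @appR s t t' h' =>
    injection hu with h1 h2
    subst h1; subst h2
    exact Or.inr (Or.inr ⟨t', h', rfl⟩)

theorem rew_sym_inv {S : Sig α} {R : Set (Rule α)} {p : α × ℕ} {w : Tm (α × ℕ)}
    (h : Rew (RLab S R) (.sym p) w) :
    ∃ ρ γ, ρ ∈ RLab S R ∧ (Tm.sym p : Tm (α × ℕ)) = subst γ ρ.lhs ∧ w = subst γ ρ.rhs := by
  generalize hu : (Tm.sym p : Tm (α × ℕ)) = u at h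
  cases h with
  | @root ρ γ hρ => exact ⟨ρ, γ, hρ, rfl, rfl⟩
  | appL h' => exact absurd hu (by simp)
  | appR h' => exact absurd hu (by simp)

theorem accApp {S : Sig α} {R : Set (Rule α)} (hR : ∀ ρ ∈ R, GoodRule S ρ) :
    ∀ {s : Tm (α × ℕ)}, Acc (Rinv S R) s → HeadOk S s →
      ∀ {t : Tm (α × ℕ)}, Acc (Rinv S R) t → Acc (Rinv S R) (.app s t) := by
  intro s hs
  induction hs with
  | intro s hsf ihs =>
    intro hok t ht
    induction ht with
    | intro t htf iht =>
      constructor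
      intro y hy
      rcases rew_app_inv hy with ⟨ρ, γ, hρ, heq, rfl⟩ | ⟨a', h, rfl⟩ | ⟨b', h, rfl⟩
      · exact absurd (heq ▸ (fun p hp => hok p hp : HeadOk S (.app s t)))
          (rootNotOk hR hρ γ)
      · exact ihs _ h (headOkStep hR h hok) ⟨t, htf⟩
      · exact iht _ h

theorem accSpine {S : Sig α} {R : Set (Rule α)} (hR : ∀ ρ ∈ R, GoodRule S ρ) :
    ∀ (ts : List (Tm (α × ℕ))) {s : Tm (α × ℕ)}, HeadOk S s → Acc (Rinv S R) s →
      (∀ t ∈ ts, Acc (Rinv S R) t) → Acc (Rinv S R) (mkApp s ts) := by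
  intro ts
  induction ts with
  | nil => intro s _ hs _; exact hs
  | cons t ts ih =>
    intro s hok hs hts
    exact ih (s := .app s t) (fun p hp => hok p hp)
      (accApp hR hs hok (hts t (by simp))) (fun u hu => hts u (by simp [hu]))

end LabProof
namespace LabProof

variable {α : Type}

/-! ## The computability predicate -/

def Cp (S : Sig α) (R : Set (Rule α)) : Ty → Tm (α × ℕ) → Prop
  | .base _, s => Acc (Rinv S R) s
  | .arrow σ τ, s => Acc (Rinv S R) s ∧
      ∀ t, HasTy (SigLab S) t σ → Cp S R σ t → Cp S R τ (.app s t)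

theorem cpAcc {S : Sig α} {R : Set (Rule α)} :
    ∀ {τ : Ty} {s : Tm (α × ℕ)}, Cp S R τ s → Acc (Rinv S R) s := by
  intro τ s h
  cases τ with
  | base b => exact h
  | arrow σ τ => exact h.1

theorem cpStep {S : Sig α} {R : Set (Rule α)} :
    ∀ {τ : Ty} {s s' : Tm (α × ℕ)}, Cp S R τ s → Rew (RLab S R) s s' → Cp S R τ s' := by
  intro τ
  induction τ with
  | base b => intro s s' h hst; exact h.inv hst
  | arrow σ τ ihσ ihτ =>
    intro s s' h hst
    exact ⟨h.1.inv hst, fun t ht hct => ihτ (h.2 t ht hct) (Rew.appL hst)⟩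

theorem stuckC {S : Sig α} {R : Set (Rule α)} (hR : ∀ ρ ∈ R, GoodRule S ρ) :
    ∀ (τ : Ty) {s : Tm (α × ℕ)}, HeadOk S s → Acc (Rinv S R) s → Cp S R τ s := by
  intro τ
  induction τ with
  | base b => intro s _ h; exact h
  | arrow σ τ ihσ ihτ =>
    intro s hok hs
    exact ⟨hs, fun t ht hct => ihτ (fun p hp => hok p hp) (accApp hR hs hok (cpAcc hct))⟩

/-! ## Computable argument lists -/

inductive CompArgs (S : Sig α) (R : Set (Rule α)) : Ty → List (Tm (α × ℕ)) → Ty → Prop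
  | nil (τ : Ty) : CompArgs S R τ [] τ
  | cons {σ τ τ' : Ty} {t : Tm (α × ℕ)} {ts : List (Tm (α × ℕ))} :
      HasTy (SigLab S) t σ → Cp S R σ t →
      CompArgs S R τ ts τ' → CompArgs S R (.arrow σ τ) (t :: ts) τ'

theorem compArgs_hasTy {S : Sig α} {R : Set (Rule α)} :
    ∀ {τ ts τ'}, CompArgs S R τ ts τ' →
      ∀ {s : Tm (α × ℕ)}, HasTy (SigLab S) s τ → HasTy (SigLab S) (mkApp s ts) τ' := by
  intro τ ts τ' h
  induction h with
  | nil => intro s hs; exact hs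
  | cons ht hc hrest ih => intro s hs; exact ih (HasTy.app hs ht)

theorem cpMkApp {S : Sig α} {R : Set (Rule α)} :
    ∀ {τ ts τ'}, CompArgs S R τ ts τ' →
      ∀ {s : Tm (α × ℕ)}, Cp S R τ s → Cp S R τ' (mkApp s ts) := by
  intro τ ts τ' h
  induction h with
  | nil => intro s hs; exact hs
  | cons ht hc hrest ih => intro s hs; exact ih (hs.2 _ ht hc)

theorem compArgs_split {S : Sig α} {R : Set (Rule α)} :
    ∀ (l₁ : List (Tm (α × ℕ))) {l₂ τ τ'}, CompArgs S R τ (l₁ ++ l₂) τ' →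
      ∃ τm, CompArgs S R τ l₁ τm ∧ CompArgs S R τm l₂ τ' := by
  intro l₁
  induction l₁ with
  | nil => intro l₂ τ τ' h; exact ⟨τ, CompArgs.nil τ, h⟩
  | cons t l₁ ih =>
    intro l₂ τ τ' h
    cases h with
    | cons ht hc hrest =>
      obtain ⟨τm, h1, h2⟩ := ih hrest
      exact ⟨τm, CompArgs.cons ht hc h1, h2⟩

theorem compArgs_elem {S : Sig α} {R : Set (Rule α)} :
    ∀ {τ ts τ'}, CompArgs S R τ ts τ' → ∀ {t}, t ∈ ts →
      ∃ σ, HasTy (SigLab S) t σ ∧ Cp S R σ t := by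
  intro τ ts τ' h
  induction h with
  | nil => intro t ht; exact absurd ht List.not_mem_nil
  | @cons σ _ _ t0 _ ht hc hrest ih =>
    intro t hmem
    rcases List.mem_cons.1 hmem with rfl | hmem
    · exact ⟨σ, ht, hc⟩
    · exact ih hmem

/-! ## Subject reduction -/

theorem subjRed {S : Sig α} {R : Set (Rule α)} (hR : ∀ ρ ∈ R, GoodRule S ρ) :
    ∀ {u v : Tm (α × ℕ)}, Rew (RLab S R) u v →
      ∀ {σ : Ty}, HasTy (SigLab S) u σ → HasTy (SigLab S) v σ := by
  intro u v h
  induction h with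
  | @root ρ' γ hρ =>
    intro σ hσ
    rcases hρ with ⟨f, i, hf, rfl⟩ | ⟨ρ, hρR, i, rfl⟩
    · have hσ' : HasTy (SigLab S) (Tm.sym (f, i + 1)) σ := hσ
      cases hσ'
      exact HasTy.sym (S := SigLab S) (f, i)
    · obtain ⟨hspine, hlin, hsubv, ⟨σl, Hl, Hr⟩, hcf⟩ := hR ρ hρR
      have Hl' : HasTy (SigLab S) (labelTm S (i + 1) ρ.lhs) σl := labelTy _ Hl
      have hrig : Rigid (labelTm S (i + 1) ρ.lhs) := rigid_label _ _ (lhs_rigid hspine)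
      have hσ' : HasTy (SigLab S) (subst γ (labelTm S (i + 1) ρ.lhs)) σ := hσ
      obtain ⟨he, hγ⟩ := sinv γ hrig Hl' hσ'
      have goal : HasTy (SigLab S) (subst γ (labelTm S i ρ.rhs)) σl := by
        apply substTy (labelTy _ Hr)
        intro x hx
        exact hγ x ((mem_vars_label S _ _).2 (hsubv ((mem_vars_label S _ _).1 hx)))
      exact he ▸ goal
  | @appL a a' b ha ih =>
    intro σ hσ
    cases hσ with | app h1 h2 => exact HasTy.app (ih h1) h2
  | @appR a b b' hb ih =>
    intro σ hσ
    cases hσ with | app h1 h2 => exact HasTy.app h1 (ih h2)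

theorem compArgsStep {S : Sig α} {R : Set (Rule α)} (hR : ∀ ρ ∈ R, GoodRule S ρ) :
    ∀ (l₁ : List (Tm (α × ℕ))) {τ t t' l₂ τ'},
      CompArgs S R τ (l₁ ++ t :: l₂) τ' → Rew (RLab S R) t t' →
      CompArgs S R τ (l₁ ++ t' :: l₂) τ' := by
  intro l₁
  induction l₁ with
  | nil =>
    intro τ t t' l₂ τ' h hst
    cases h with
    | cons ht hc hrest =>
      exact CompArgs.cons (subjRed hR hst ht) (cpStep hc hst) hrest
  | cons a l₁ ih =>
    intro τ t t' l₂ τ' h hst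
    cases h with
    | cons ht hc hrest => exact CompArgs.cons ht hc (ih hrest hst)

/-! ## Lifting steps along spines -/

theorem rewMkApp {S : Sig α} {R : Set (Rule α)} :
    ∀ (ts : List (Tm (α × ℕ))) {a a'}, Rew (RLab S R) a a' →
      Rew (RLab S R) (mkApp a ts) (mkApp a' ts) := by
  intro ts
  induction ts with
  | nil => intro a a' h; exact h
  | cons t ts ih => intro a a' h; exact ih (Rew.appL h)

theorem rewMid {S : Sig α} {R : Set (Rule α)} (l₁ : List (Tm (α × ℕ))) {t t' : Tm (α × ℕ)}
    (l₂ : List (Tm (α × ℕ))) (s : Tm (α × ℕ)) (h : Rew (RLab S R) t t') :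
    Rew (RLab S R) (mkApp s (l₁ ++ t :: l₂)) (mkApp s (l₁ ++ t' :: l₂)) := by
  rw [mkApp_append, mkApp_append]
  exact rewMkApp l₂ (Rew.appR h)

/-! ## Decomposition of a step from a spine -/

theorem decStep {S : Sig α} {R : Set (Rule α)} {u w : Tm (α × ℕ)}
    (h : Rew (RLab S R) u w) :
    ∀ (ts : List (Tm (α × ℕ))) (s : Tm (α × ℕ)), u = mkApp s ts →
    (∃ s', Rew (RLab S R) s s' ∧ w = mkApp s' ts) ∨
    (∃ l₁ t t' l₂, ts = l₁ ++ t :: l₂ ∧ Rew (RLab S R) t t' ∧ w = mkApp s (l₁ ++ t' :: l₂)) ∨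
    (∃ l₁ l₂ ρ γ, ρ ∈ RLab S R ∧ ts = l₁ ++ l₂ ∧ mkApp s l₁ = subst γ ρ.lhs ∧
      w = mkApp (subst γ ρ.rhs) l₂) := by
  induction h with
  | @root ρ γ hρ =>
    intro ts s hu
    exact Or.inr (Or.inr ⟨ts, [], ρ, γ, hρ, (List.append_nil ts).symm, hu.symm, rfl⟩)
  | @appL a a' b ha ih =>
    intro ts s hu
    rcases List.eq_nil_or_concat ts with rfl | ⟨ts', t, rfl⟩
    · have hu' : Tm.app a b = s := hu
      subst hu'
      exact Or.inl ⟨.app a' b, Rew.appL ha, rfl⟩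
    · simp only [List.concat_eq_append] at hu ⊢
      rw [mkApp_snoc] at hu
      injection hu with h1 h2
      subst h2
      rcases ih ts' s h1 with ⟨s', hs, hw⟩ | ⟨l₁, t0, t0', l₂, he, ht, hw⟩ |
        ⟨l₁, l₂, ρ, γ, hρ, he, hm, hw⟩
      · exact Or.inl ⟨s', hs, by rw [mkApp_snoc, ← hw]⟩
      · refine Or.inr (Or.inl ⟨l₁, t0, t0', l₂ ++ [b], by rw [he]; simp, ht, ?_⟩)
        rw [show l₁ ++ t0' :: (l₂ ++ [b]) = (l₁ ++ t0' :: l₂) ++ [b] by simp, mkApp_snoc, ← hw]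
      · refine Or.inr (Or.inr ⟨l₁, l₂ ++ [b], ρ, γ, hρ, by rw [he]; simp, hm, ?_⟩)
        rw [mkApp_snoc, ← hw]
  | @appR a b b' hb ih =>
    intro ts s hu
    rcases List.eq_nil_or_concat ts with rfl | ⟨ts', t, rfl⟩
    · have hu' : Tm.app a b = s := hu
      subst hu'
      exact Or.inl ⟨.app a b', Rew.appR hb, rfl⟩
    · simp only [List.concat_eq_append] at hu ⊢
      rw [mkApp_snoc] at hu
      injection hu with h1 h2
      subst h2
      exact Or.inr (Or.inl ⟨ts', b, b', [], by simp, hb, by rw [mkApp_snoc, ← h1]⟩)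

/-! ## Symbols occurring in a term -/

def SymIn {β : Type} (p : β) : Tm β → Prop
  | .sym q => q = p
  | .var _ => False
  | .app a b => SymIn p a ∨ SymIn p b

open Classical in
theorem symIn_label {S : Sig α} {p : α × ℕ} {i : ℕ} :
    ∀ {u : Tm α}, SymIn p (labelTm S i u) →
      (S.Cons p.1 ∧ p.2 = 0) ∨ (¬ S.Cons p.1 ∧ p.2 = i) := by
  intro u
  induction u with
  | sym f =>
    intro h
    have h' : ((f, if S.Cons f then 0 else i) : α × ℕ) = p := h
    by_cases hc : S.Cons f
    · rw [if_pos hc] at h'; subst h'; exact Or.inl ⟨hc, rfl⟩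
    · rw [if_neg hc] at h'; subst h'; exact Or.inr ⟨hc, rfl⟩
  | var x => intro h; exact h.elim
  | app a b iha ihb =>
    intro h
    rcases h with h | h
    · exact iha h
    · exact ihb h

/-! ## Computability of substitution instances -/

theorem substCp {S : Sig α} {R : Set (Rule α)} {γ : ℕ → Tm (α × ℕ)} :
    ∀ {u : Tm (α × ℕ)} {σ : Ty}, HasTy (SigLab S) u σ →
      (∀ x ∈ u.vars, HasTy (SigLab S) (γ x) (S.varTy x) ∧ Cp S R (S.varTy x) (γ x)) →
      (∀ p, SymIn p u → Cp S R (S.typeOf p.1) (.sym p)) →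
      Cp S R σ (subst γ u) := by
  intro u σ h
  induction h with
  | sym f =>
    intro _ hsym
    exact hsym f rfl
  | var x =>
    intro hv _
    exact (hv x (by simp [Tm.vars])).2
  | @app a b σ' τ' ha hb iha ihb =>
    intro hv hsym
    have hb' : HasTy (SigLab S) (subst γ b) σ' :=
      substTy hb (fun x hx => (hv x (by simp only [Tm.vars, Set.mem_union]; exact Or.inr hx)).1)
    exact (iha (fun x hx => hv x (by simp only [Tm.vars, Set.mem_union]; exact Or.inl hx))
        (fun p hp => hsym p (Or.inl hp))).2 (subst γ b) hb'
      (ihb (fun x hx => hv x (by simp only [Tm.vars, Set.mem_union]; exact Or.inr hx))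
        (fun p hp => hsym p (Or.inr hp)))

end LabProof
namespace LabProof

variable {α : Type}

theorem cpCurry {S : Sig α} {R : Set (Rule α)} :
    ∀ (τ : Ty) (s : Tm (α × ℕ)),
      (∀ ts τ', CompArgs S R τ ts τ' → Acc (Rinv S R) (mkApp s ts)) → Cp S R τ s := by
  intro τ
  induction τ with
  | base b => intro s h; exact h [] _ (CompArgs.nil _)
  | arrow σ τ ihσ ihτ =>
    intro s h
    exact ⟨h [] _ (CompArgs.nil _), fun t ht hct =>
      ihτ (.app s t) (fun ts τ' hts => h (t :: ts) τ' (CompArgs.cons ht hct hts))⟩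

theorem compArgs_nil_eq {S : Sig α} {R : Set (Rule α)} {τ τ' : Ty}
    (h : CompArgs S R τ [] τ') : τ = τ' := by
  cases h; rfl

theorem rootAcc {S : Sig α} {R : Set (Rule α)} (hR : ∀ ρ ∈ R, GoodRule S ρ)
    (hC : ∀ f, S.Cons f → ConsArgsBase (S.typeOf f)) {f : α} {j : ℕ}
    (ihj : ∀ g, Cp S R (S.typeOf g) (.sym (g, j)))
    {ρ' : Rule (α × ℕ)} (hρ : ρ' ∈ RLab S R) (γ : ℕ → Tm (α × ℕ))
    {l₁ l₂ : List (Tm (α × ℕ))} {τ' : Ty}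
    (heq : mkApp (.sym (f, j + 1)) l₁ = subst γ ρ'.lhs)
    (hargs : CompArgs S R (S.typeOf f) (l₁ ++ l₂) τ') :
    Acc (Rinv S R) (mkApp (subst γ ρ'.rhs) l₂) := by
  obtain ⟨τm, hl₁, hl₂⟩ := compArgs_split l₁ hargs
  have hty1 : HasTy (SigLab S) (mkApp (.sym (f, j + 1)) l₁) τm :=
    compArgs_hasTy hl₁ (HasTy.sym (S := SigLab S) (f, j + 1))
  rcases hρ with ⟨g, i0, hg, rfl⟩ | ⟨ρ, hρR, i0, rfl⟩
  · -- relabeling rule f_{i+1} → f_i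
    have heq' : mkApp (.sym (f, j + 1)) l₁
        = mkApp (Tm.sym (g, i0 + 1)) ([] : List (Tm (α × ℕ))) := heq
    obtain ⟨hpq, hnil⟩ := mkApp_sym_inj heq'
    injection hpq with h1 h2
    subst h1
    have h3 : j = i0 := by omega
    subst h3
    subst hnil
    have hτm := compArgs_nil_eq hl₁
    subst hτm
    show Acc (Rinv S R) (mkApp (Tm.sym (f, j)) l₂)
    exact cpAcc (cpMkApp hl₂ (ihj f))
  · -- a labeled copy of a rule of R
    obtain ⟨hspine, hlin, hsubv, ⟨σl, Hl, Hr⟩, hcf⟩ := hR ρ hρR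
    obtain ⟨g, ls, hg, hlshape, hpats⟩ := lhsSpine_shape hspine
    have heqA : mkApp (.sym (f, j + 1)) l₁ = subst γ (labelTm S (i0 + 1) ρ.lhs) := heq
    have heq0 := heqA
    have hlhs : subst γ (labelTm S (i0 + 1) ρ.lhs) =
        mkApp (.sym (g, i0 + 1)) (ls.map fun q => subst γ (labelTm S (i0 + 1) q)) := by
      rw [hlshape, label_mkApp, subst_mkApp, List.map_map]
      have hh : subst γ (labelTm S (i0 + 1) (Tm.sym g)) = (Tm.sym (g, i0 + 1) : Tm (α × ℕ)) := by
        simp only [labelTm, subst]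
        rw [if_neg hg]
      rw [hh]
      rfl
    rw [hlhs] at heq0
    obtain ⟨hpq, hl1eq⟩ := mkApp_sym_inj heq0
    injection hpq with h1 h2
    subst h1
    have h3 : j = i0 := by omega
    subst h3
    have Hl' : HasTy (SigLab S) (labelTm S (j + 1) ρ.lhs) σl := labelTy _ Hl
    have hrig : Rigid (labelTm S (j + 1) ρ.lhs) := rigid_label _ _ (lhs_rigid hspine)
    have hredex : HasTy (SigLab S) (subst γ (labelTm S (j + 1) ρ.lhs)) τm := heqA ▸ hty1
    obtain ⟨hστ, hγty⟩ := sinv γ hrig Hl' hredex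
    have hvl : ∀ x ∈ ρ.lhs.vars, HasTy (SigLab S) (γ x) (S.varTy x) := by
      intro x hx
      exact hγty x ((mem_vars_label S _ _).2 hx)
    have hγcp : ∀ x ∈ ρ.lhs.vars, Cp S R (S.varTy x) (γ x) := by
      intro x hx
      have hx' := hx
      rw [hlshape] at hx'
      obtain ⟨q, hq, hxq⟩ := ((mem_vars_mkApp _ _).1 hx').resolve_left (by simp [Tm.vars])
      have hqmem : subst γ (labelTm S (j + 1) q) ∈ l₁ := by
        rw [hl1eq]; exact List.mem_map_of_mem hq
      obtain ⟨σq, htq, hcq⟩ := compArgs_elem hl₁ hqmem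
      cases hpats q hq with
      | var y =>
        simp [Tm.vars] at hxq
        subst hxq
        have htq' : HasTy (SigLab S) (γ x) σq := htq
        have huq := ty_uniq htq' (hvl x hx)
        rw [← huq]
        exact hcq
      | cons hps hbase =>
        obtain ⟨bi, hbity⟩ := hbase
        obtain ⟨b0, hb0⟩ := (pat_vars_base hC hps hbity).2 x hxq
        rw [hb0]
        show Acc (Rinv S R) (γ x)
        exact acc_subtm (cpAcc hcq) (Subtm.strict (pat_var_subtm γ (j + 1) hps x hxq))
    have hrhs : Cp S R σl (subst γ (labelTm S j ρ.rhs)) := by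
      apply substCp (labelTy _ Hr)
      · intro x hx
        have hx' : x ∈ ρ.lhs.vars := hsubv ((mem_vars_label S _ _).1 hx)
        exact ⟨hvl x hx', hγcp x hx'⟩
      · intro p hp
        rcases symIn_label hp with ⟨hc1, h0⟩ | ⟨hc1, hj'⟩
        · exact stuckC hR _ (fun q hq => Or.inl (by cases hq; exact hc1))
            (accBase hR (fun q hq => Or.inl (by cases hq; exact hc1)) (fun a b h => nomatch h))
        · obtain ⟨p1, p2⟩ := p
          cases hj'
          exact ihj p1
    rw [hστ] at hrhs
    show Acc (Rinv S R) (mkApp (subst γ (labelTm S j ρ.rhs)) l₂)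
    exact cpAcc (cpMkApp hl₂ hrhs)

theorem symC {S : Sig α} {R : Set (Rule α)} (hR : ∀ ρ ∈ R, GoodRule S ρ)
    (hC : ∀ f, S.Cons f → ConsArgsBase (S.typeOf f)) :
    ∀ (i : ℕ) (f : α), Cp S R (S.typeOf f) (.sym (f, i)) := by
  intro i
  induction i using Nat.strong_induction_on with
  | _ i ih =>
    intro f
    by_cases hcons : S.Cons f
    · exact stuckC hR _ (fun p hp => Or.inl (by cases hp; exact hcons))
        (accBase hR (fun p hp => Or.inl (by cases hp; exact hcons)) (fun a b h => nomatch h))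
    · cases i with
      | zero =>
        exact stuckC hR _ (fun p hp => Or.inr (by cases hp; rfl))
          (accBase hR (fun p hp => Or.inr (by cases hp; rfl)) (fun a b h => nomatch h))
      | succ j =>
        refine cpCurry _ _ ?_
        intro ts τ' hts
        have hdummy : Acc (Rinv S R) (mkApp (.var 0) ts) := by
          refine accSpine hR ts (fun p hp => nomatch hp)
            (accBase hR (fun p hp => nomatch hp) (fun a b h => nomatch h)) ?_
          intro t ht
          obtain ⟨σ, _, hc⟩ := compArgs_elem hts ht
          exact cpAcc hc
        suffices H : ∀ z, Acc (Rinv S R) z → ∀ (ts : List (Tm (α × ℕ))) (τ' : Ty),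
            z = mkApp (.var 0) ts → CompArgs S R (S.typeOf f) ts τ' →
            Acc (Rinv S R) (mkApp (.sym (f, j + 1)) ts) by
          exact H _ hdummy ts τ' rfl hts
        intro z hz
        induction hz with
        | intro z hzf ihz =>
          rintro ts τ' rfl hts
          constructor
          intro w hw
          rcases decStep hw ts _ rfl with ⟨s', hs, rfl⟩ | ⟨l₁, t, t', l₂, rfl, hst, rfl⟩ |
            ⟨l₁, l₂, ρ, γ, hρ, rfl, hm, rfl⟩
          · obtain ⟨ρ', γ, hρ', heqs, rfl⟩ := rew_sym_inv hs
            exact rootAcc hR hC (fun g => ih j (Nat.lt_succ_self j) g) hρ' γ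
              (l₁ := []) (heq := heqs) hts
          · exact ihz _ (rewMid l₁ l₂ _ hst) _ τ' rfl (compArgsStep hR l₁ hts hst)
          · exact rootAcc hR hC (fun g => ih j (Nat.lt_succ_self j) g) hρ γ hm hts

theorem noInf {S : Sig α} {R : Set (Rule α)} :
    ∀ {s : Tm (α × ℕ)}, Acc (Rinv S R) s → ∀ (seq : ℕ → Tm (α × ℕ)), seq 0 = s →
      (∀ n, Rew (RLab S R) (seq n) (seq (n + 1))) → False := by
  intro s h
  induction h with
  | intro s hf ih =>
    rintro seq rfl hstep
    exact ih (seq 1) (hstep 0) (fun n => seq (n + 1)) rfl (fun n => hstep (n + 1))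

end LabProof

open LabProof in
/-- Termination of the labeled system: in a labeled cons-free ATRS whose
constructors take only base-type arguments, there is no infinite reduction of
well-typed labeled terms. -/
theorem labeled_terminating {α : Type} (S : Sig α) (R : Set (Rule α))
    (hR : ∀ ρ ∈ R, GoodRule S ρ)
    (hC : ∀ f, S.Cons f → ConsArgsBase (S.typeOf f)) :
    ¬ ∃ seq : ℕ → Tm (α × ℕ),
        (∀ n, ∃ σ, HasTy (SigLab S) (seq n) σ) ∧
        ∀ n, Rew (RLab S R) (seq n) (seq (n + 1)) := by
  rintro ⟨seq, hty, hstep⟩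
  obtain ⟨σ, hσ⟩ := hty 0
  have hvars : ∀ x ∈ (seq 0).vars,
      HasTy (SigLab S) (Tm.var x) (S.varTy x) ∧ Cp S R (S.varTy x) (Tm.var x) := by
    intro x _
    exact ⟨HasTy.var x, stuckC hR _ (fun p hp => nomatch hp)
      (accBase hR (fun p hp => nomatch hp) (fun a b h => nomatch h))⟩
  have hsyms : ∀ p, SymIn p (seq 0) → Cp S R (S.typeOf p.1) (Tm.sym p) :=
    fun p _ => symC hR hC p.2 p.1
  have hcp := substCp (γ := Tm.var) hσ hvars hsyms
  rw [subst_var] at hcp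
  exact noInf (cpAcc hcp) seq rfl hstep
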